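/- From any initial composite state σ₀ of the asynchronous muddy-children protocol satisfying consistent(σ₀), there exists a valid trace leading to a final composite state in which each child's status is consistent with the instance of the problem: letting M = ⋃_i Obs(σ₀_i), every child i ∈ M has status m and every child i ∉ M has status c. -/

import Mathlib

/-- Epistemic status of a child: unknown, muddy, or clean. -/
inductive Status : Type
  | u | m | c

/-- A message ⟨j, r, status⟩. -/
structure Msg (n : ℕ) : Type where
  sender : Fin n
  round : ℕ
  status : Status

/-- A child's state: initial ⟨Obs⟩ or running ⟨Obs, r, status⟩. -/
inductive ChildState (n : ℕ) : Type
  | start (Obs : Finset (Fin n))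
  | run (Obs : Finset (Fin n)) (r : ℕ) (st : Status)

open Status ChildState

/-- Observation set of a child state. -/
def ChildState.obs {n : ℕ} : ChildState n → Finset (Fin n)
  | .start O => O
  | .run O _ _ => O

/-- A composite state. -/
abbrev CState (n : ℕ) := Fin n → ChildState n

/-- The set M of muddy children determined by a composite state. -/
def muddySet {n : ℕ} (σ : CState n) : Finset (Fin n) :=
  Finset.univ.biUnion fun i => (σ i).obs

/-- consistent(σ): M nonempty and every child sees exactly M \ {i}. -/
def consistent {n : ℕ} (σ : CState n) : Prop :=
  (muddySet σ).Nonempty ∧ ∀ i, (σ i).obs = muddySet σ \ {i}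

/-- The constrained local transitions of child `i` (labels init/emit/receive). -/
inductive LocalStep {n : ℕ} (i : Fin n) :
    ChildState n → Option (Msg n) → ChildState n → Option (Msg n) → Prop
  | init_nonempty (O : Finset (Fin n)) (h : O ≠ ∅) :
      LocalStep i (start O) none (run O 0 u) none
  | init_empty (O : Finset (Fin n)) (h : O = ∅) :
      LocalStep i (start O) none (run O 0 m) none
  | emit (O : Finset (Fin n)) (r : ℕ) (s : Status) :
      LocalStep i (run O r s) none (run O r s) (some ⟨i, r, s⟩)
  | recv_decided (O : Finset (Fin n)) (r : ℕ) (s : Status) (mg : Msg n) (h : s ≠ u) :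
      LocalStep i (run O r s) (some mg) (run O r s) none
  | recv_c_eq (O : Finset (Fin n)) (r : ℕ) (j : Fin n) (r' : ℕ)
      (hj : j ∉ O) (hr : r' = O.card) :
      LocalStep i (run O r u) (some ⟨j, r', c⟩) (run O r' c) none
  | recv_c_succ (O : Finset (Fin n)) (r : ℕ) (j : Fin n) (r' : ℕ)
      (hj : j ∉ O) (hr : r' = O.card + 1) :
      LocalStep i (run O r u) (some ⟨j, r', c⟩) (run O (r' - 1) m) none
  | recv_m_eq (O : Finset (Fin n)) (r : ℕ) (j : Fin n) (r' : ℕ)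
      (hj : j ∈ O) (hr : r' = O.card) :
      LocalStep i (run O r u) (some ⟨j, r', m⟩) (run O r' m) none
  | recv_m_pred (O : Finset (Fin n)) (r : ℕ) (j : Fin n) (r' : ℕ)
      (hj : j ∈ O) (hr : r' = O.card - 1) :
      LocalStep i (run O r u) (some ⟨j, r', m⟩) (run O (r' + 1) c) none
  | recv_u_in_lt (O : Finset (Fin n)) (r : ℕ) (j : Fin n) (r' : ℕ)
      (hj : j ∈ O) (hr : r' < r) :
      LocalStep i (run O r u) (some ⟨j, r', u⟩) (run O r u) none
  | recv_u_in_mid (O : Finset (Fin n)) (r : ℕ) (j : Fin n) (r' : ℕ)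
      (hj : j ∈ O) (h1 : r ≤ r') (h2 : r' < O.card - 1) :
      LocalStep i (run O r u) (some ⟨j, r', u⟩) (run O (r' + 1) u) none
  | recv_u_in_top (O : Finset (Fin n)) (r : ℕ) (j : Fin n) (r' : ℕ)
      (hj : j ∈ O) (hr : r' = O.card - 1) :
      LocalStep i (run O r u) (some ⟨j, r', u⟩) (run O (r' + 1) m) none
  | recv_u_out_le (O : Finset (Fin n)) (r : ℕ) (j : Fin n) (r' : ℕ)
      (hj : j ∉ O) (hr : r' ≤ r) :
      LocalStep i (run O r u) (some ⟨j, r', u⟩) (run O r u) none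
  | recv_u_out_mid (O : Finset (Fin n)) (r : ℕ) (j : Fin n) (r' : ℕ)
      (hj : j ∉ O) (h1 : r < r') (h2 : r' < O.card) :
      LocalStep i (run O r u) (some ⟨j, r', u⟩) (run O r' u) none
  | recv_u_out_top (O : Finset (Fin n)) (r : ℕ) (j : Fin n) (r' : ℕ)
      (hj : j ∉ O) (hr : r' = O.card) :
      LocalStep i (run O r u) (some ⟨j, r', u⟩) (run O r' m) none

/-- The no-equivocation condition on an input message: the sender must be in a
running state matching the message (or a state strictly ahead of an unknown-status message). -/
def senderOK {n : ℕ} (σ : CState n) (mg : Msg n) : Prop :=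
  ∃ (O : Finset (Fin n)) (rj : ℕ) (sj : Status),
    σ mg.sender = run O rj sj ∧
      ((mg.status = sj ∧ mg.round = rj) ∨ (mg.status = u ∧ mg.round < rj))

/-- The composition constraint: init transitions require consistency of the
composite state, receives require the no-equivocation condition. -/
def stepConstraint {n : ℕ} (σ : CState n) (i : Fin n) (inp : Option (Msg n)) : Prop :=
  ((∃ O, σ i = start O) → consistent σ) ∧ ∀ mg, inp = some mg → senderOK σ mg

/-- Constrained transitions of the composite system: component `i` takes a local
transition, subject to the composition constraint. -/
inductive CStep {n : ℕ} :
    CState n → Fin n → Option (Msg n) → CState n → Option (Msg n) → Prop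
  | mk (σ : CState n) (i : Fin n) (inp : Option (Msg n)) (s' : ChildState n)
      (out : Option (Msg n))
      (hl : LocalStep i (σ i) inp s' out) (hc : stepConstraint σ i inp) :
      CStep σ i inp (Function.update σ i s') out

/-- A recorded transition: acting component, input message, output message. -/
abbrev Transition (n : ℕ) := Fin n × Option (Msg n) × Option (Msg n)

/-- A composite state is initial when all components are in initial states. -/
def isInitial {n : ℕ} (σ : CState n) : Prop := ∀ i, ∃ O, σ i = start O

/-- The trace `tr` emits the message `mg`. -/
def emits {n : ℕ} (tr : List (Transition n)) (mg : Msg n) : Prop :=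
  ∃ i inp, (i, inp, some mg) ∈ tr

/-- The message `mg` is an input of some transition of the trace `tr`. -/
def isInput {n : ℕ} (tr : List (Transition n)) (mg : Msg n) : Prop :=
  ∃ i out, (i, some mg, out) ∈ tr

/-- Constrained traces: sequences of constrained transitions from `σ0`. -/
inductive ConstrainedTrace {n : ℕ} (σ0 : CState n) :
    List (Transition n) → CState n → Prop
  | nil : ConstrainedTrace σ0 [] σ0
  | snoc (tr : List (Transition n)) (σ : CState n) (i : Fin n)
      (inp : Option (Msg n)) (σ' : CState n) (out : Option (Msg n))
      (htr : ConstrainedTrace σ0 tr σ)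
      (hstep : CStep σ i inp σ' out) :
      ConstrainedTrace σ0 (tr ++ [(i, inp, out)]) σ'

/-- Valid messages from the initial composite state `σ0`: messages emitted by a
constrained trace from `σ0` all of whose input messages are themselves valid,
i.e., emitted by valid traces from `σ0`. -/
inductive ValidMsg {n : ℕ} (σ0 : CState n) : Msg n → Prop
  | intro (mg : Msg n) (tr : List (Transition n)) (σ : CState n)
      (h0 : isInitial σ0)
      (hct : ConstrainedTrace σ0 tr σ)
      (hin : ∀ mg', isInput tr mg' → ValidMsg σ0 mg')
      (hem : emits tr mg) : ValidMsg σ0 mg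

/-- Valid traces from `σ0`: constrained traces from an initial composite state
in which every input message can be emitted by some valid trace from `σ0`. -/
def ValidTrace {n : ℕ} (σ0 : CState n) (tr : List (Transition n)) (σ : CState n) : Prop :=
  isInitial σ0 ∧ ConstrainedTrace σ0 tr σ ∧ ∀ mg, isInput tr mg → ValidMsg σ0 mg

/-- Status of a running child state. -/
def ChildState.status? {n : ℕ} : ChildState n → Option Status
  | .start _ => none
  | .run _ _ s => some s

/-- A composite state is final when every component knows its status. -/
def isFinal {n : ℕ} (σ : CState n) : Prop :=
  ∀ i, ∃ (O : Finset (Fin n)) (r : ℕ) (s : Status), σ i = run O r s ∧ s ≠ u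

/-- Round of a child state, with initial states at round -1. -/
def roundZ {n : ℕ} : ChildState n → ℤ
  | .start _ => -1
  | .run _ r _ => (r : ℤ)


section MuddyAux
open Status ChildState
variable {n : ℕ}

/-- A self-supporting trace bundle: a constrained trace all of whose inputs are valid. -/
def PTrace (σ0 : CState n) (tr : List (Transition n)) (σ : CState n) : Prop :=
  ConstrainedTrace σ0 tr σ ∧ ∀ mg, isInput tr mg → ValidMsg σ0 mg

lemma PTrace_nil (σ0 : CState n) : PTrace σ0 [] σ0 := by
  refine ⟨.nil, ?_⟩
  rintro mg ⟨i, out, h⟩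
  simp at h

lemma emits_append {tr tr' : List (Transition n)} {mg : Msg n} (h : emits tr mg) :
    emits (tr ++ tr') mg := by
  obtain ⟨i, inp, h⟩ := h
  exact ⟨i, inp, by simp [h]⟩

lemma emits_last {tr : List (Transition n)} {i : Fin n} {inp : Option (Msg n)} {mg : Msg n} :
    emits (tr ++ [(i, inp, some mg)]) mg := ⟨i, inp, by simp⟩

lemma validMsg_of_PTrace {σ0 : CState n} {tr σ mg} (h0 : isInitial σ0)
    (h : PTrace σ0 tr σ) (he : emits tr mg) : ValidMsg σ0 mg :=
  ValidMsg.intro mg tr σ h0 h.1 h.2 he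

lemma update_self_eq {σ : CState n} {i : Fin n} {s : ChildState n} (h : σ i = s) :
    Function.update σ i s = σ := by
  rw [← h]; exact Function.update_eq_self i σ

lemma PTrace_step {σ0 : CState n} {tr : List (Transition n)} {σ : CState n}
    (i : Fin n) {inp : Option (Msg n)} {s' : ChildState n} {out : Option (Msg n)}
    (τ : CState n)
    (h : PTrace σ0 tr σ)
    (hl : LocalStep i (σ i) inp s' out)
    (hcons : (∃ O, σ i = start O) → consistent σ)
    (hin : ∀ mg, inp = some mg → ValidMsg σ0 mg ∧ senderOK σ mg)
    (hτ : Function.update σ i s' = τ) :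
    PTrace σ0 (tr ++ [(i, inp, out)]) τ := by
  have hstep : CStep σ i inp τ out :=
    hτ ▸ CStep.mk σ i inp s' out hl ⟨hcons, fun mg hmg => (hin mg hmg).2⟩
  refine ⟨.snoc tr σ i inp τ out h.1 hstep, ?_⟩
  rintro mg ⟨j, o, hmem⟩
  rcases List.mem_append.1 hmem with hmem | hmem
  · exact h.2 mg ⟨j, o, hmem⟩
  · simp only [List.mem_singleton, Prod.mk.injEq] at hmem
    exact (hin mg hmem.2.1.symm).1

end MuddyAux

/-- From any consistent initial composite state there is a valid trace leading
to a final composite state in which every muddy child has status m and every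
clean child has status c. -/
theorem muddy_reaches_correct_final_state (n : ℕ) (hn : 1 ≤ n)
    (σ0 : CState n) (h0 : isInitial σ0) (hc : consistent σ0) :
    ∃ (tr : List (Transition n)) (σ : CState n),
      ValidTrace σ0 tr σ ∧
      ∀ i : Fin n, ∃ (O : Finset (Fin n)) (r : ℕ),
        σ i = ChildState.run O r
          (if i ∈ muddySet σ0 then Status.m else Status.c) := by
  classical
  obtain ⟨hMne, hobs⟩ := hc
  obtain ⟨a, ha⟩ := hMne
  set M := muddySet σ0 with hMdef
  set N := M.card with hNdef
  -- every child starts with observation set M \ {i}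
  have hσ0 : ∀ i, σ0 i = start (M \ {i}) := by
    intro i
    obtain ⟨O, hO⟩ := h0 i
    have h1 := hobs i
    rw [hO] at h1 ⊢
    simp only [ChildState.obs] at h1
    rw [h1]
  -- there are at least two children
  have hex : ∃ i0 : Fin n, i0 ≠ a := by
    have h1 : a ∈ muddySet σ0 := by rw [← hMdef]; exact ha
    simp only [muddySet, Finset.mem_biUnion, Finset.mem_univ, true_and] at h1
    obtain ⟨i, hi⟩ := h1
    rw [hobs i, Finset.mem_sdiff, Finset.mem_singleton] at hi
    exact ⟨i, fun h => hi.2 h.symm⟩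
  obtain ⟨i0, hi0⟩ := hex
  -- any state whose observations are M \ {i} is consistent
  have consM : ∀ σ : CState n, (∀ i, (σ i).obs = M \ {i}) → consistent σ := by
    intro σ hob
    have hMs : muddySet σ = M := by
      ext x
      simp only [muddySet, Finset.mem_biUnion, Finset.mem_univ, true_and]
      constructor
      · rintro ⟨i, hi⟩
        rw [hob i, Finset.mem_sdiff] at hi
        exact hi.1
      · intro hx
        by_cases hxa : x = a
        · refine ⟨i0, ?_⟩
          rw [hob i0, Finset.mem_sdiff, Finset.mem_singleton]
          exact ⟨hx, by rw [hxa]; exact fun h => hi0 h.symm⟩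
        · refine ⟨a, ?_⟩
          rw [hob a, Finset.mem_sdiff, Finset.mem_singleton]
          exact ⟨hx, hxa⟩
    constructor
    · rw [hMs]; exact ⟨a, ha⟩
    · intro i; rw [hMs]; exact hob i
  have hN1 : 1 ≤ N := Finset.card_pos.2 ⟨a, ha⟩
  have cardIn : ∀ i ∈ M, (M \ {i}).card = N - 1 := by
    intro i hi
    rw [Finset.sdiff_singleton_eq_erase, Finset.card_erase_of_mem hi]
  have sdiffOut : ∀ i, i ∉ M → M \ {i} = M := by
    intro i hi
    ext x
    rw [Finset.mem_sdiff, Finset.mem_singleton]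
    exact ⟨fun h => h.1, fun h => ⟨h, fun e => hi (e ▸ h)⟩⟩
  have haOb : ∀ i, i ≠ a → a ∈ M \ {i} := by
    intro i h
    rw [Finset.mem_sdiff, Finset.mem_singleton]
    exact ⟨ha, fun e => h e.symm⟩
  have hneOb : 2 ≤ N → ∀ i, M \ {i} ≠ ∅ := by
    intro h2 i
    by_cases hi : i ∈ M
    · have hpos : 0 < (M \ {i}).card := by rw [cardIn i hi]; omega
      exact (Finset.card_pos.1 hpos).ne_empty
    · rw [sdiffOut i hi]
      exact Finset.nonempty_iff_ne_empty.1 ⟨a, ha⟩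
  -- the target final state
  set σF : CState n := fun i => if i ∈ M then run (M \ {i}) (N - 1) m else run (M \ {i}) N c
    with hσFdef
  have hσF : ∀ i, σF i = if i ∈ M then run (M \ {i}) (N - 1) m else run (M \ {i}) N c :=
    fun i => rfl
  have hσFa : σF a = run (M \ {a}) (N - 1) m := by rw [hσF a, if_pos ha]
  have hrunF : ∀ i, ∀ O, σF i ≠ start O := by
    intro i O
    rw [hσF i]
    split <;> exact fun h => by cases h
  suffices hS : ∃ tr σ', PTrace σ0 tr σ' ∧ ∀ i, σ' i = σF i by
    obtain ⟨tr, σ', hP, hfin⟩ := hS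
    refine ⟨tr, σ', ⟨h0, hP.1, hP.2⟩, fun i => ?_⟩
    by_cases hi : i ∈ M
    · exact ⟨M \ {i}, N - 1, by rw [hfin i, hσF i]; simp [hi]⟩
    · exact ⟨M \ {i}, N, by rw [hfin i, hσF i]; simp [hi]⟩
  -- Phase 0: all children initialize
  have phase0 : ∀ L : List (Fin n), L.Nodup →
      PTrace σ0 (L.map fun i => ((i, none, none) : Transition n))
        (fun i => if i ∈ L then run (M \ {i}) 0 (if M \ {i} = ∅ then m else u) else σ0 i) := by
    intro L
    induction L using List.reverseRecOn with
    | nil =>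
      intro _
      have he : (fun i => if i ∈ ([] : List (Fin n)) then
          run (M \ {i}) 0 (if M \ {i} = ∅ then m else u) else σ0 i) = σ0 := by
        funext i; simp
      rw [List.map_nil, he]
      exact PTrace_nil σ0
    | append_singleton L' j ih =>
      intro hnd
      rw [List.nodup_append] at hnd
      obtain ⟨hnd', -, hdisj⟩ := hnd
      have hjL' : j ∉ L' := fun h => hdisj j h j (by simp) rfl
      have hI := ih hnd'
      rw [List.map_append, List.map_singleton]
      set σp : CState n :=
        fun i => if i ∈ L' then run (M \ {i}) 0 (if M \ {i} = ∅ then m else u) else σ0 i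
        with hσpdef
      have hpj : σp j = start (M \ {j}) := by
        show (if j ∈ L' then run (M \ {j}) 0 (if M \ {j} = ∅ then m else u) else σ0 j) = _
        rw [if_neg hjL', hσ0 j]
      refine PTrace_step (s' := run (M \ {j}) 0 (if M \ {j} = ∅ then m else u)) j _ hI
        ?_ ?_ ?_ ?_
      · rw [hpj]
        by_cases hE : M \ {j} = ∅
        · rw [if_pos hE]; exact LocalStep.init_empty _ hE
        · rw [if_neg hE]; exact LocalStep.init_nonempty _ hE
      · intro _
        apply consM
        intro i
        show (if i ∈ L' then run (M \ {i}) 0 (if M \ {i} = ∅ then m else u) else σ0 i).obs = _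
        by_cases hi : i ∈ L'
        · rw [if_pos hi]; rfl
        · rw [if_neg hi, hσ0 i]; rfl
      · intro mg hmg; simp at hmg
      · funext i
        rw [Function.update_apply]
        by_cases hij : i = j
        · subst hij
          have hmm : i ∈ L' ++ [i] := by simp
          rw [if_pos rfl, if_pos hmm]
        · rw [if_neg hij]
          have hmem : (i ∈ L' ++ [j]) ↔ i ∈ L' := by simp [hij]
          show (if i ∈ L' then run (M \ {i}) 0 (if M \ {i} = ∅ then m else u) else σ0 i) = _
          by_cases hi : i ∈ L'
          · rw [if_pos hi, if_pos (hmem.2 hi)]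
          · rw [if_neg hi, if_neg (fun h => hi (hmem.1 h))]
  -- Broadcast phase: once a valid ⟨a, N-1, m⟩ has been emitted, everyone decides
  have bcast : ∀ (trB : List (Transition n)) (σB : CState n),
      PTrace σ0 trB σB → emits trB ⟨a, N - 1, m⟩ →
      σB a = run (M \ {a}) (N - 1) m →
      (∀ i, σB i = σF i ∨ σB i = run (M \ {i}) 0 u) →
      ∃ tr σ', PTrace σ0 tr σ' ∧ ∀ i, σ' i = σF i := by
    intro trB σB hPB hem hBa hBi
    have key : ∀ L : List (Fin n), ∃ tr σ', PTrace σ0 tr σ' ∧ emits tr ⟨a, N - 1, m⟩ ∧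
        ∀ i, σ' i = if i ∈ L then σF i else σB i := by
      intro L
      induction L using List.reverseRecOn with
      | nil => exact ⟨trB, σB, hPB, hem, fun i => by simp⟩
      | append_singleton L' j ih =>
        obtain ⟨tr, σ', hP, hemt, hst⟩ := ih
        have hsa : σ' a = run (M \ {a}) (N - 1) m := by
          rw [hst a]
          by_cases haL : a ∈ L'
          · rw [if_pos haL]; exact hσFa
          · rw [if_neg haL]; exact hBa
        have hVM : ValidMsg σ0 ⟨a, N - 1, m⟩ := validMsg_of_PTrace h0 hP hemt
        have hSO : senderOK σ' ⟨a, N - 1, m⟩ := ⟨M \ {a}, N - 1, m, hsa, Or.inl ⟨rfl, rfl⟩⟩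
        have hrun : ∀ i O, σ' i ≠ start O := by
          intro i O hO
          rw [hst i] at hO
          by_cases hi : i ∈ L'
          · rw [if_pos hi] at hO; exact hrunF i O hO
          · rw [if_neg hi] at hO
            rcases hBi i with h | h
            · rw [h] at hO; exact hrunF i O hO
            · rw [h] at hO; cases hO
        have hstep : ∃ s', LocalStep j (σ' j) (some ⟨a, N - 1, m⟩) s' none ∧ s' = σF j := by
          have hdec : σ' j = σF j →
              ∃ s', LocalStep j (σ' j) (some ⟨a, N - 1, m⟩) s' none ∧ s' = σF j := by
            intro hF
            rw [hF, hσF j]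
            by_cases hjM : j ∈ M
            · rw [if_pos hjM]
              exact ⟨_, LocalStep.recv_decided _ _ _ _ (fun h => Status.noConfusion h), rfl⟩
            · rw [if_neg hjM]
              exact ⟨_, LocalStep.recv_decided _ _ _ _ (fun h => Status.noConfusion h), rfl⟩
          by_cases hjL : j ∈ L'
          · exact hdec (by rw [hst j, if_pos hjL])
          · rcases hBi j with h | h
            · exact hdec (by rw [hst j, if_neg hjL, h])
            · have hj' : σ' j = run (M \ {j}) 0 u := by rw [hst j, if_neg hjL, h]
              have hja : j ≠ a := by
                rintro rfl
                rw [hBa] at h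
                simp at h
              rw [hj']
              by_cases hjM : j ∈ M
              · refine ⟨run (M \ {j}) (N - 1) m,
                  LocalStep.recv_m_eq _ _ _ _ (haOb j hja) (cardIn j hjM).symm, ?_⟩
                rw [hσF j, if_pos hjM]
              · have h1 : N - 1 = (M \ {j}).card - 1 := by rw [sdiffOut j hjM]
                refine ⟨run (M \ {j}) ((N - 1) + 1) c,
                  LocalStep.recv_m_pred _ _ _ _ (haOb j hja) h1, ?_⟩
                rw [hσF j, if_neg hjM]
                congr 1
                omega
        obtain ⟨s', hl, hs'⟩ := hstep
        refine ⟨tr ++ [(j, some ⟨a, N - 1, m⟩, none)], Function.update σ' j s',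
          PTrace_step j _ hP hl ?_ ?_ rfl, emits_append hemt, ?_⟩
        · rintro ⟨O, hO⟩
          exact absurd hO (hrun j O)
        · intro mg hmg
          rw [Option.some_inj] at hmg
          subst hmg
          exact ⟨hVM, hSO⟩
        · intro i
          rw [Function.update_apply]
          by_cases hij : i = j
          · subst hij
            have hmm : i ∈ L' ++ [i] := by simp
            rw [if_pos rfl, if_pos hmm, hs']
          · rw [if_neg hij, hst i]
            have hmem : (i ∈ L' ++ [j]) ↔ i ∈ L' := by simp [hij]
            by_cases hi : i ∈ L'
            · rw [if_pos hi, if_pos (hmem.2 hi)]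
            · rw [if_neg hi, if_neg (fun h => hi (hmem.1 h))]
    obtain ⟨tr, σ', hP, -, hst⟩ := key (List.finRange n)
    exact ⟨tr, σ', hP, fun i => by rw [hst i, if_pos (List.mem_finRange i)]⟩
  -- The trace of phase 0
  set σA : CState n := fun i => run (M \ {i}) 0 (if M \ {i} = ∅ then m else u) with hσAdef
  have hσA : ∀ i, σA i = run (M \ {i}) 0 (if M \ {i} = ∅ then m else u) := fun i => rfl
  set trA := (List.finRange n).map (fun i => ((i, none, none) : Transition n)) with htrAdef
  have hA : PTrace σ0 trA σA := by
    have he : (fun i => if i ∈ List.finRange n then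
        run (M \ {i}) 0 (if M \ {i} = ∅ then m else u) else σ0 i) = σA := by
      funext i; rw [if_pos (List.mem_finRange i)]
    have h2 := phase0 (List.finRange n) (List.nodup_finRange n)
    rw [he] at h2
    exact h2
  rcases eq_or_lt_of_le hN1 with hN1' | hN2
  · -- Case N = 1
    have hNe : N = 1 := hN1'.symm
    have hMa : M = {a} := by
      obtain ⟨x, hx⟩ := Finset.card_eq_one.1 hNe
      rw [hx] at ha ⊢
      rw [Finset.mem_singleton] at ha
      rw [ha]
    have hOa : M \ {a} = ∅ := by rw [hMa]; simp
    have hN10 : N - 1 = 0 := by omega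
    have hAa : σA a = run (M \ {a}) (N - 1) m := by
      rw [hσA a, if_pos hOa, hN10]
    have hP1 : PTrace σ0 (trA ++ [(a, none, some ⟨a, N - 1, m⟩)]) σA := by
      refine PTrace_step a σA hA ?_ ?_ ?_ (update_self_eq hAa)
      · rw [hAa]; exact LocalStep.emit _ _ _
      · rintro ⟨O, hO⟩
        rw [hσA a] at hO
        cases hO
      · intro mg hmg; simp at hmg
    refine bcast _ σA hP1 emits_last hAa ?_
    intro i
    by_cases hia : i = a
    · subst hia
      left
      rw [hAa, hσFa]
    · right
      rw [hσA i, if_neg (Finset.ne_empty_of_mem (haOb i hia))]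
  · -- Case N ≥ 2
    obtain ⟨b, hb, hba⟩ := Finset.exists_mem_ne hN2 a
    have haInb : a ∈ M \ {b} := by
      rw [Finset.mem_sdiff, Finset.mem_singleton]
      exact ⟨ha, fun e => hba e.symm⟩
    have hbIna : b ∈ M \ {a} := by
      rw [Finset.mem_sdiff, Finset.mem_singleton]
      exact ⟨hb, hba⟩
    have hca : (M \ {a}).card = N - 1 := cardIn a ha
    have hcb : (M \ {b}).card = N - 1 := cardIn b hb
    have hAu : σA = fun i => if i = a ∨ i = b then run (M \ {i}) 0 u else run (M \ {i}) 0 u := by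
      funext i
      rw [hσA i, if_neg (hneOb (by omega) i)]
      split <;> rfl
    -- the ladder: a and b climb rounds together
    have lad : ∀ r, r ≤ N - 2 → ∃ tr, PTrace σ0 tr
        (fun i => if i = a ∨ i = b then run (M \ {i}) r u else run (M \ {i}) 0 u) := by
      intro r
      induction r with
      | zero => intro _; exact ⟨trA, hAu ▸ hA⟩
      | succ r ih =>
        intro hr
        obtain ⟨tr, hP⟩ := ih (by omega)
        set σr : CState n :=
          fun i => if i = a ∨ i = b then run (M \ {i}) r u else run (M \ {i}) 0 u with hσrdef
        have hra : σr a = run (M \ {a}) r u := by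
          show (if a = a ∨ a = b then run (M \ {a}) r u else run (M \ {a}) 0 u) = _
          rw [if_pos (Or.inl rfl)]
        have hrb : σr b = run (M \ {b}) r u := by
          show (if b = a ∨ b = b then run (M \ {b}) r u else run (M \ {b}) 0 u) = _
          rw [if_pos (Or.inr rfl)]
        have hP1 : PTrace σ0 (tr ++ [(a, none, some ⟨a, r, u⟩)]) σr := by
          refine PTrace_step a σr hP ?_ ?_ ?_ (update_self_eq hra)
          · rw [hra]; exact LocalStep.emit _ _ _
          · rintro ⟨O, hO⟩; rw [hra] at hO; cases hO
          · intro mg hmg; simp at hmg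
        have hP2 : PTrace σ0 ((tr ++ [(a, none, some ⟨a, r, u⟩)]) ++
            [(b, none, some ⟨b, r, u⟩)]) σr := by
          refine PTrace_step b σr hP1 ?_ ?_ ?_ (update_self_eq hrb)
          · rw [hrb]; exact LocalStep.emit _ _ _
          · rintro ⟨O, hO⟩; rw [hrb] at hO; cases hO
          · intro mg hmg; simp at hmg
        have hem_a : emits ((tr ++ [(a, none, some ⟨a, r, u⟩)]) ++
            [(b, none, some ⟨b, r, u⟩)]) ⟨a, r, u⟩ := emits_append emits_last
        have hem_b : emits ((tr ++ [(a, none, some ⟨a, r, u⟩)]) ++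
            [(b, none, some ⟨b, r, u⟩)]) ⟨b, r, u⟩ := emits_last
        have hmidb : r < (M \ {b}).card - 1 := by rw [hcb]; omega
        have hmida : r < (M \ {a}).card - 1 := by rw [hca]; omega
        have hP3 : PTrace σ0 (((tr ++ [(a, none, some ⟨a, r, u⟩)]) ++
            [(b, none, some ⟨b, r, u⟩)]) ++ [(b, some ⟨a, r, u⟩, none)])
            (Function.update σr b (run (M \ {b}) (r + 1) u)) := by
          refine PTrace_step b _ hP2 ?_ ?_ ?_ rfl
          · rw [hrb]
            exact LocalStep.recv_u_in_mid _ _ _ _ haInb le_rfl hmidb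
          · rintro ⟨O, hO⟩; rw [hrb] at hO; cases hO
          · intro mg hmg
            rw [Option.some_inj] at hmg
            subst hmg
            exact ⟨validMsg_of_PTrace h0 hP2 hem_a, ⟨M \ {a}, r, u, hra, Or.inl ⟨rfl, rfl⟩⟩⟩
        have hupa : Function.update σr b (run (M \ {b}) (r + 1) u) a = run (M \ {a}) r u := by
          rw [Function.update_apply, if_neg (fun h => hba h.symm)]
          exact hra
        have hupb : Function.update σr b (run (M \ {b}) (r + 1) u) b =
            run (M \ {b}) (r + 1) u := Function.update_self _ _ _
        refine ⟨(((tr ++ [(a, none, some ⟨a, r, u⟩)]) ++ [(b, none, some ⟨b, r, u⟩)]) ++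
          [(b, some ⟨a, r, u⟩, none)]) ++ [(a, some ⟨b, r, u⟩, none)], ?_⟩
        refine PTrace_step (s' := run (M \ {a}) (r + 1) u) a _ hP3 ?_ ?_ ?_ ?_
        · rw [hupa]
          exact LocalStep.recv_u_in_mid _ _ _ _ hbIna le_rfl hmida
        · rintro ⟨O, hO⟩; rw [hupa] at hO; cases hO
        · intro mg hmg
          rw [Option.some_inj] at hmg
          subst hmg
          exact ⟨validMsg_of_PTrace h0 hP3 (emits_append hem_b),
            ⟨M \ {b}, r + 1, u, hupb, Or.inr ⟨rfl, Nat.lt_succ_self r⟩⟩⟩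
        · funext i
          rw [Function.update_apply]
          by_cases hia : i = a
          · rw [hia, if_pos rfl]
            show _ = (if a = a ∨ a = b then run (M \ {a}) (r + 1) u else run (M \ {a}) 0 u)
            rw [if_pos (Or.inl rfl)]
          · rw [if_neg hia, Function.update_apply]
            by_cases hib : i = b
            · rw [hib, if_pos rfl]
              show _ = (if b = a ∨ b = b then run (M \ {b}) (r + 1) u else run (M \ {b}) 0 u)
              rw [if_pos (Or.inr rfl)]
            · rw [if_neg hib]
              have h1 : σr i = run (M \ {i}) 0 u := by
                show (if i = a ∨ i = b then run (M \ {i}) r u else run (M \ {i}) 0 u) = _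
                rw [if_neg (not_or.2 ⟨hia, hib⟩)]
              rw [h1]
              show _ = (if i = a ∨ i = b then run (M \ {i}) (r + 1) u else run (M \ {i}) 0 u)
              rw [if_neg (not_or.2 ⟨hia, hib⟩)]
    -- top of the ladder: a and b become muddy
    obtain ⟨tr, hP⟩ := lad (N - 2) le_rfl
    set σr : CState n :=
      fun i => if i = a ∨ i = b then run (M \ {i}) (N - 2) u else run (M \ {i}) 0 u with hσrdef
    have hra : σr a = run (M \ {a}) (N - 2) u := by
      show (if a = a ∨ a = b then run (M \ {a}) (N - 2) u else run (M \ {a}) 0 u) = _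
      rw [if_pos (Or.inl rfl)]
    have hrb : σr b = run (M \ {b}) (N - 2) u := by
      show (if b = a ∨ b = b then run (M \ {b}) (N - 2) u else run (M \ {b}) 0 u) = _
      rw [if_pos (Or.inr rfl)]
    have hP1 : PTrace σ0 (tr ++ [(a, none, some ⟨a, N - 2, u⟩)]) σr := by
      refine PTrace_step a σr hP ?_ ?_ ?_ (update_self_eq hra)
      · rw [hra]; exact LocalStep.emit _ _ _
      · rintro ⟨O, hO⟩; rw [hra] at hO; cases hO
      · intro mg hmg; simp at hmg
    have hP2 : PTrace σ0 ((tr ++ [(a, none, some ⟨a, N - 2, u⟩)]) ++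
        [(b, none, some ⟨b, N - 2, u⟩)]) σr := by
      refine PTrace_step b σr hP1 ?_ ?_ ?_ (update_self_eq hrb)
      · rw [hrb]; exact LocalStep.emit _ _ _
      · rintro ⟨O, hO⟩; rw [hrb] at hO; cases hO
      · intro mg hmg; simp at hmg
    have hem_a : emits ((tr ++ [(a, none, some ⟨a, N - 2, u⟩)]) ++
        [(b, none, some ⟨b, N - 2, u⟩)]) ⟨a, N - 2, u⟩ := emits_append emits_last
    have hem_b : emits ((tr ++ [(a, none, some ⟨a, N - 2, u⟩)]) ++
        [(b, none, some ⟨b, N - 2, u⟩)]) ⟨b, N - 2, u⟩ := emits_last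
    have hsucc : N - 2 + 1 = N - 1 := by omega
    have htopb : (N - 2 : ℕ) = (M \ {b}).card - 1 := by rw [hcb]; omega
    have htopa : (N - 2 : ℕ) = (M \ {a}).card - 1 := by rw [hca]; omega
    have hP3 : PTrace σ0 (((tr ++ [(a, none, some ⟨a, N - 2, u⟩)]) ++
        [(b, none, some ⟨b, N - 2, u⟩)]) ++ [(b, some ⟨a, N - 2, u⟩, none)])
        (Function.update σr b (run (M \ {b}) (N - 1) m)) := by
      refine PTrace_step b _ hP2 ?_ ?_ ?_ rfl
      · rw [hrb, ← hsucc]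
        exact LocalStep.recv_u_in_top _ _ _ _ haInb htopb
      · rintro ⟨O, hO⟩; rw [hrb] at hO; cases hO
      · intro mg hmg
        rw [Option.some_inj] at hmg
        subst hmg
        exact ⟨validMsg_of_PTrace h0 hP2 hem_a,
          ⟨M \ {a}, N - 2, u, hra, Or.inl ⟨rfl, rfl⟩⟩⟩
    have hupa : Function.update σr b (run (M \ {b}) (N - 1) m) a =
        run (M \ {a}) (N - 2) u := by
      rw [Function.update_apply, if_neg (fun h => hba h.symm)]
      exact hra
    have hupb : Function.update σr b (run (M \ {b}) (N - 1) m) b =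
        run (M \ {b}) (N - 1) m := Function.update_self _ _ _
    set σT : CState n :=
      fun i => if i = a ∨ i = b then run (M \ {i}) (N - 1) m else run (M \ {i}) 0 u with hσTdef
    have hP4 : PTrace σ0 ((((tr ++ [(a, none, some ⟨a, N - 2, u⟩)]) ++
        [(b, none, some ⟨b, N - 2, u⟩)]) ++ [(b, some ⟨a, N - 2, u⟩, none)]) ++
        [(a, some ⟨b, N - 2, u⟩, none)]) σT := by
      refine PTrace_step (s' := run (M \ {a}) (N - 2 + 1) m) a _ hP3 ?_ ?_ ?_ ?_
      · rw [hupa]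
        exact LocalStep.recv_u_in_top _ _ _ _ hbIna htopa
      · rintro ⟨O, hO⟩; rw [hupa] at hO; cases hO
      · intro mg hmg
        rw [Option.some_inj] at hmg
        subst hmg
        exact ⟨validMsg_of_PTrace h0 hP3 (emits_append hem_b),
          ⟨M \ {b}, N - 1, m, hupb, Or.inr ⟨rfl, show N - 2 < N - 1 by omega⟩⟩⟩
      · funext i
        rw [Function.update_apply]
        by_cases hia : i = a
        · rw [hia, if_pos rfl]
          show _ = (if a = a ∨ a = b then run (M \ {a}) (N - 1) m else run (M \ {a}) 0 u)
          rw [if_pos (Or.inl rfl), hsucc]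
        · rw [if_neg hia, Function.update_apply]
          by_cases hib : i = b
          · rw [hib, if_pos rfl]
            show _ = (if b = a ∨ b = b then run (M \ {b}) (N - 1) m else run (M \ {b}) 0 u)
            rw [if_pos (Or.inr rfl)]
          · rw [if_neg hib]
            have h1 : σr i = run (M \ {i}) 0 u := by
              show (if i = a ∨ i = b then run (M \ {i}) (N - 2) u else run (M \ {i}) 0 u) = _
              rw [if_neg (not_or.2 ⟨hia, hib⟩)]
            rw [h1]
            show _ = (if i = a ∨ i = b then run (M \ {i}) (N - 1) m else run (M \ {i}) 0 u)
            rw [if_neg (not_or.2 ⟨hia, hib⟩)]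
    have hTa : σT a = run (M \ {a}) (N - 1) m := by
      show (if a = a ∨ a = b then run (M \ {a}) (N - 1) m else run (M \ {a}) 0 u) = _
      rw [if_pos (Or.inl rfl)]
    have hP5 : PTrace σ0 (((((tr ++ [(a, none, some ⟨a, N - 2, u⟩)]) ++
        [(b, none, some ⟨b, N - 2, u⟩)]) ++ [(b, some ⟨a, N - 2, u⟩, none)]) ++
        [(a, some ⟨b, N - 2, u⟩, none)]) ++ [(a, none, some ⟨a, N - 1, m⟩)]) σT := by
      refine PTrace_step a σT hP4 ?_ ?_ ?_ (update_self_eq hTa)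
      · rw [hTa]; exact LocalStep.emit _ _ _
      · rintro ⟨O, hO⟩; rw [hTa] at hO; cases hO
      · intro mg hmg; simp at hmg
    refine bcast _ σT hP5 emits_last hTa ?_
    intro i
    by_cases hiab : i = a ∨ i = b
    · left
      have hiM : i ∈ M := by rcases hiab with rfl | rfl; exacts [ha, hb]
      have h1 : σT i = run (M \ {i}) (N - 1) m := by
        show (if i = a ∨ i = b then run (M \ {i}) (N - 1) m else run (M \ {i}) 0 u) = _
        rw [if_pos hiab]
      rw [h1, hσF i, if_pos hiM]
    · right
      show (if i = a ∨ i = b then run (M \ {i}) (N - 1) m else run (M \ {i}) 0 u) = _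
      rw [if_neg hiab]
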